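/- Let Π = (Π′, Π″) be a nontrivial partition and l ∈ ℤ, and suppose that S_{Π,l} ∩ Δ is nonempty. Then −r′·r″/2 < l·r − ρ_{Π′} < r′·r″/2, where ρ_{Π′} = Σ_{i∈Π′}((r+1)/2 − i). -/

import Mathlib

open scoped BigOperators

attribute [local instance] Classical.propDecidable

noncomputable section

namespace Verlinde


variable {r : ℕ}

/-- The root `α^{ij} = e_i - e_j`, viewed as the linear functional `x_i - x_j`. -/
def stdRoot (r : ℕ) (i j : Fin r) : Fin r → ℝ :=
  fun t => (if t = i then 1 else 0) - (if t = j then 1 else 0)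

/-- `B ∈ 𝓑`: an ordered tuple of roots forming a linear basis of
`V* = {a : ∑ i, a i = 0}`. -/
def IsOB (r : ℕ) (B : Fin (r - 1) → Fin r → ℝ) : Prop :=
  (∀ m, ∃ i j, i ≠ j ∧ B m = stdRoot r i j) ∧
    LinearIndependent ℝ B ∧
    ∀ a : Fin r → ℝ, (∑ i, a i) = 0 → a ∈ Submodule.span ℝ (Set.range B)

/-- Coordinates of `a` with respect to the tuple `B` (junk unless such
coordinates exist; they are unique when `B` is linearly independent). -/
def coordsOf (B : Fin (r - 1) → Fin r → ℝ) (a : Fin r → ℝ) : Fin (r - 1) → ℝ :=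
  if h : ∃ c : Fin (r - 1) → ℝ, a = ∑ j, c j • B j then h.choose else 0

/-- The integer part `[a]_B ∈ Λ`. -/
def intPart (B : Fin (r - 1) → Fin r → ℝ) (a : Fin r → ℝ) : Fin r → ℝ :=
  ∑ j, (⌊coordsOf B a j⌋ : ℝ) • B j

/-- The fractional part `{a}_B`. -/
def fracPart (B : Fin (r - 1) → Fin r → ℝ) (a : Fin r → ℝ) : Fin r → ℝ :=
  a - intPart B a

/-- `a ∈ V*` is regular if all its `B`-coordinates are non-integral, for every `B ∈ 𝓑`,
i.e. `{a}_B ∈ ∑_j (0,1)·β^{[j]}` for every `B ∈ 𝓑`. -/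
def IsRegular (r : ℕ) (a : Fin r → ℝ) : Prop :=
  ∀ B, IsOB r B → ∀ j, Int.fract (coordsOf B a j) ≠ 0

/-- The flag `Fl(B)`: `Fl(B) j = span (β^{[j]}, …, β^{[r-1]})`. -/
def flagOf (B : Fin (r - 1) → Fin r → ℝ) : Fin (r - 1) → Submodule ℝ (Fin r → ℝ) :=
  fun j => Submodule.span ℝ {x | ∃ i, j ≤ i ∧ B i = x}

/-- `B ⊣ C`. -/
def Dashv (B C : Fin (r - 1) → Fin r → ℝ) : Prop :=
  ∀ τ : Equiv.Perm (Fin (r - 1)), flagOf (B ∘ τ) ≠ flagOf C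

/-- A diagonal basis: a subset of `𝓑` of cardinality `(r-1)!` any two distinct
members of which satisfy `B ⊣ C`. -/
def IsDiagonalBasis (r : ℕ) (D : Finset (Fin (r - 1) → Fin r → ℝ)) : Prop :=
  D.card = (r - 1).factorial ∧ (∀ B ∈ D, IsOB r B) ∧
    ∀ B ∈ D, ∀ C ∈ D, B ≠ C → Dashv B C

/-- The index of the last coordinate (`r` in `1`-indexed notation). -/
def lastI (r : ℕ) (h : 0 < r) : Fin r := ⟨r - 1, by omega⟩

/-- `ρ = ((r-1)/2, (r-3)/2, …, (1-r)/2)`. -/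
def rho (r : ℕ) : Fin r → ℝ := fun i => ((r : ℝ) - 1) / 2 - (i : ℝ)

/-- `σ · a`, where `(σ·a)_i = a_{σ⁻¹ i}`. -/
def permVec (σ : Equiv.Perm (Fin r)) (a : Fin r → ℝ) : Fin r → ℝ := fun i => a (σ⁻¹ i)

/-- A nontrivial (ordered) partition `Π = (Π′, Π″)`, encoded by `Π′ = P`:
both parts nonempty and `r ∈ Π″`. -/
def NontrivPart (r : ℕ) (h : 0 < r) (P : Finset (Fin r)) : Prop :=
  P.Nonempty ∧ lastI r h ∉ P

/-- The wall `S_{Π,l} ⊆ V*`. -/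
def wallSet (r : ℕ) (P : Finset (Fin r)) (l : ℤ) : Set (Fin r → ℝ) :=
  {c | (∑ i, c i) = 0 ∧ (∑ i ∈ P, c i) = (l : ℝ)}

/-- The simplex `Δ` of admissible parabolic weights. -/
def DeltaSet (r : ℕ) (h : 0 < r) : Set (Fin r → ℝ) :=
  {c | (∑ i, c i) = 0 ∧ (∀ i j : Fin r, i < j → c j < c i) ∧
    c ⟨0, h⟩ - c (lastI r h) < 1}

/-- The chamber of a (regular) point `c ∈ V*`. -/
def chamberOf (r : ℕ) (c : Fin r → ℝ) : Set (Fin r → ℝ) :=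
  {b | (∑ i, b i) = 0 ∧ IsRegular r b ∧ ∀ B, IsOB r B → intPart B b = intPart B c}

/-- `{i,j}` is an edge of `Tree(B)`. -/
def IsTreeEdge (B : Fin (r - 1) → Fin r → ℝ) (i j : Fin r) : Prop :=
  ∃ m, B m = stdRoot r i j ∨ B m = stdRoot r j i

/-- `B` splits along the partition `Π` (with `Π′ = P`): exactly one edge of
`Tree(B)` joins `Π′` and `Π″`. -/
def SplitsAlong (B : Fin (r - 1) → Fin r → ℝ) (P : Finset (Fin r)) : Prop :=
  ∃! pr : Fin r × Fin r, pr.1 ∈ P ∧ pr.2 ∉ P ∧ IsTreeEdge B pr.1 pr.2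

/-- The linking root `β_link = α^{pq}` with `p ∈ Π′`, `q ∈ Π″`. -/
def betaLink (B : Fin (r - 1) → Fin r → ℝ) (P : Finset (Fin r)) : Fin r → ℝ :=
  if h : ∃ pr : Fin r × Fin r, pr.1 ∈ P ∧ pr.2 ∉ P ∧ IsTreeEdge B pr.1 pr.2 then
    stdRoot r h.choose.1 h.choose.2
  else 0


/-- (Lemma `myfavouritelemma2`.)  If the wall `S_{Π,l}`
meets `Δ` then `−r′·r″/2 < l·r − ρ_{Π′} < r′·r″/2`  (indices `0`-based, so
`ρ_{Π′} = ∑_{i∈Π′} ((r+1)/2 − (i+1))`). -/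
theorem wall_meets_Delta_inequality
    (r : ℕ) (hr : 2 ≤ r)
    (P : Finset (Fin r)) (hP : NontrivPart r (by omega) P) (l : ℤ)
    (hmeet : ∃ c, c ∈ wallSet r P l ∧ c ∈ DeltaSet r (by omega)) :
    -(((P.card : ℝ) * (Pᶜ.card : ℝ)) / 2) <
        (l : ℝ) * r - ∑ i ∈ P, (((r : ℝ) + 1) / 2 - ((i : ℕ) + 1)) ∧
      (l : ℝ) * r - (∑ i ∈ P, (((r : ℝ) + 1) / 2 - ((i : ℕ) + 1))) <
        ((P.card : ℝ) * (Pᶜ.card : ℝ)) / 2 := by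
  obtain ⟨c, ⟨hsum, hl⟩, hsum', hmono, hgap⟩ := hmeet
  have hrpos : 0 < r := by omega
  set g : Fin r → Fin r → ℝ := fun i j =>
    (if i < j then (1:ℝ)/2 else 0) - (if j < i then (1:ℝ)/2 else 0) with hg
  -- monotonicity consequences
  have hmono' : ∀ a b : Fin r, a ≤ b → c b ≤ c a := by
    intro a b hab
    rcases eq_or_lt_of_le hab with h | h
    · rw [h]
    · exact le_of_lt (hmono _ _ h)
  have hlt1 : ∀ a b : Fin r, c a - c b < 1 := by
    intro a b
    have h1 : c a ≤ c ⟨0, hrpos⟩ := hmono' _ _ (by simp [Fin.le_def])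
    have h2 : c (lastI r hrpos) ≤ c b := hmono' _ _ (by simp [Fin.le_def, lastI]; omega)
    linarith [hgap]
  -- the pointwise bound
  have hbound : ∀ i ∈ P, ∀ j ∈ Pᶜ, |c i - c j - g i j| < 1/2 := by
    intro i hi j hj
    have hij : i ≠ j := by
      intro h; subst h; exact (Finset.mem_compl.mp hj) hi
    rcases lt_or_gt_of_ne hij with h | h
    · have h1 := hmono _ _ h
      have h2 := hlt1 i j
      simp only [hg, if_pos h, if_neg (asymm h)]
      rw [abs_lt]; constructor <;> linarith
    · have h1 := hmono _ _ h
      have h2 := hlt1 j i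
      simp only [hg, if_neg (asymm h), if_pos h]
      rw [abs_lt]; constructor <;> linarith
  -- sum over complement
  have hPc : (∑ j ∈ Pᶜ, c j) = -(l:ℝ) := by
    have h := Finset.sum_add_sum_compl P c
    rw [hl, hsum] at h
    linarith
  have hcardsum : (P.card : ℝ) + (Pᶜ.card : ℝ) = r := by
    have := Finset.card_add_card_compl P
    rw [Fintype.card_fin] at this
    exact_mod_cast this
  -- Step B : double sum of differences
  have hB : (∑ i ∈ P, ∑ j ∈ Pᶜ, (c i - c j)) = (l:ℝ) * r := by
    have h1 : (∑ i ∈ P, ∑ j ∈ Pᶜ, (c i - c j))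
        = ∑ i ∈ P, ((Pᶜ.card : ℝ) * c i - ∑ j ∈ Pᶜ, c j) :=
      Finset.sum_congr rfl (fun i _ => by
        rw [Finset.sum_sub_distrib, Finset.sum_const, nsmul_eq_mul])
    rw [h1, Finset.sum_sub_distrib, ← Finset.mul_sum, Finset.sum_const, nsmul_eq_mul,
      hl, hPc]
    linear_combination (l:ℝ) * hcardsum
  -- row sums of g
  have hrow : ∀ i : Fin r, (∑ j, g i j) = ((r:ℝ)+1)/2 - ((i:ℕ)+1) := by
    intro i
    have h1 : (∑ j, (if i < j then (1:ℝ)/2 else 0))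
        = ((Finset.Ioi i).card : ℝ) * (1/2) := by
      rw [Finset.sum_ite, Finset.sum_const, Finset.sum_const]
      simp [Finset.filter_lt_eq_Ioi]
    have h2 : (∑ j, (if j < i then (1:ℝ)/2 else 0))
        = ((Finset.Iio i).card : ℝ) * (1/2) := by
      rw [Finset.sum_ite, Finset.sum_const, Finset.sum_const]
      simp [Finset.filter_gt_eq_Iio]
    have hioi : (Finset.Ioi i).card = r - 1 - (i : ℕ) := by
      rw [Fin.card_Ioi]
    have hiio : (Finset.Iio i).card = (i : ℕ) := by
      rw [Fin.card_Iio]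
    have hile : (i : ℕ) < r := i.isLt
    simp only [hg, Finset.sum_sub_distrib, h1, h2, hioi, hiio]
    have : ((r - 1 - (i : ℕ) : ℕ) : ℝ) = (r : ℝ) - 1 - (i : ℕ) := by
      push_cast [Nat.cast_sub (by omega : (i:ℕ) ≤ r - 1), Nat.cast_sub (by omega : 1 ≤ r)]
      ring
    rw [this]; ring
  -- antisymmetry : sum of g over P × P is zero
  have hPP : (∑ i ∈ P, ∑ j ∈ P, g i j) = 0 := by
    have key : (∑ i ∈ P, ∑ j ∈ P, g i j) + (∑ i ∈ P, ∑ j ∈ P, g i j) = 0 := by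
      nth_rewrite 2 [Finset.sum_comm]
      rw [← Finset.sum_add_distrib]
      have : ∀ i ∈ P, (∑ j ∈ P, g i j) + (∑ j ∈ P, g j i) = 0 := by
        intro i _
        rw [← Finset.sum_add_distrib]
        apply Finset.sum_eq_zero
        intro j _
        rcases lt_trichotomy i j with h | h | h
        · simp [hg, h, asymm h]
        · simp [hg, h]
        · simp [hg, h, asymm h]
      rw [Finset.sum_congr rfl this, Finset.sum_const, smul_zero]
    linarith
  -- Step C
  have hC : (∑ i ∈ P, ∑ j ∈ Pᶜ, g i j)
      = ∑ i ∈ P, (((r : ℝ) + 1) / 2 - ((i : ℕ) + 1)) := by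
    have h1 : ∀ i ∈ P, (∑ j ∈ Pᶜ, g i j) = (∑ j, g i j) - ∑ j ∈ P, g i j := by
      intro i _
      have := Finset.sum_add_sum_compl P (g i)
      linarith
    rw [Finset.sum_congr rfl h1, Finset.sum_sub_distrib, hPP,
      Finset.sum_congr rfl (fun i _ => hrow i)]
    ring
  -- combine
  have hsplit : (∑ i ∈ P, ∑ j ∈ Pᶜ, (c i - c j - g i j))
      = (l:ℝ) * r - ∑ i ∈ P, (((r : ℝ) + 1) / 2 - ((i : ℕ) + 1)) := by
    have h1 : ∀ i ∈ P, (∑ j ∈ Pᶜ, (c i - c j - g i j))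
        = (∑ j ∈ Pᶜ, (c i - c j)) - ∑ j ∈ Pᶜ, g i j :=
      fun i _ => Finset.sum_sub_distrib (fun j => c i - c j) (fun j => g i j)
    rw [Finset.sum_congr rfl h1, Finset.sum_sub_distrib, hB, hC]
  have hne : (P ×ˢ Pᶜ).Nonempty :=
    Finset.Nonempty.product hP.1 ⟨lastI r hrpos, Finset.mem_compl.mpr hP.2⟩
  have habs : |(l:ℝ) * r - ∑ i ∈ P, (((r : ℝ) + 1) / 2 - ((i : ℕ) + 1))|
      < ((P.card : ℝ) * (Pᶜ.card : ℝ)) / 2 := by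
    rw [← hsplit, ← Finset.sum_product']
    calc |∑ p ∈ P ×ˢ Pᶜ, (c p.1 - c p.2 - g p.1 p.2)|
        ≤ ∑ p ∈ P ×ˢ Pᶜ, |c p.1 - c p.2 - g p.1 p.2| :=
          Finset.abs_sum_le_sum_abs _ _
      _ < ∑ _p ∈ P ×ˢ Pᶜ, (1/2 : ℝ) := by
          apply Finset.sum_lt_sum_of_nonempty hne
          intro p hp
          exact hbound p.1 (Finset.mem_product.mp hp).1 p.2 (Finset.mem_product.mp hp).2
      _ = ((P.card : ℝ) * (Pᶜ.card : ℝ)) / 2 := by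
          rw [Finset.sum_const, Finset.card_product, nsmul_eq_mul]
          push_cast; ring
  have := abs_lt.mp habs
  exact ⟨this.1, this.2⟩


end Verlinde
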